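/- Let h_n be the theoretical Hirsch index and suppose j ≥ 2h_n + 1 with j ≤ n. Then v_{j,n}·x_{j,n} = j(1 − n·S(j−1)/j) ≥ j/2 and v_{j,n}^2 ≤ n·S(j−1) ≤ j; consequently x_{j,n} ≥ √j/2. -/

import Mathlib

open MeasureTheory ProbabilityTheory Finset

set_option maxHeartbeats 400000 in
/-- for `j ≥ 2h_n + 1`, `j ≤ n`, one has
`v_{j,n} x_{j,n} = j(1 − nS(j−1)/j) ≥ j/2`, `v_{j,n}² ≤ nS(j−1) ≤ j`, hence
`x_{j,n} ≥ √j/2`. -/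
theorem hirsch_tail_inequalities
    {Ω : Type*} [MeasureSpace Ω] [IsProbabilityMeasure (ℙ : Measure Ω)]
    (X : Ω → ℝ) (hX : Measurable X) (hXpos : ∀ ω, 0 < X ω)
    (S Sm : ℝ → ℝ)
    (hS : ∀ x, S x = (ℙ {ω | x < X ω}).toReal)
    (hSm : ∀ x, Sm x = (ℙ {ω | x ≤ X ω}).toReal)
    (hSpos : ∀ x, 0 < S x)
    (h : ℕ → ℝ)
    (hh : ∀ n : ℕ, h n = sSup {x : ℝ | 0 ≤ x ∧ x ≤ n * Sm x})
    (v : ℕ → ℕ → ℝ)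
    (hv : ∀ j n, v j n = Real.sqrt (n * S ((j : ℝ) - 1) * (1 - S ((j : ℝ) - 1))))
    (x : ℕ → ℕ → ℝ)
    (hx : ∀ j n, x j n = ((j : ℝ) - n * S ((j : ℝ) - 1)) / v j n) :
    ∀ n : ℕ, 1 ≤ n → ∀ j : ℕ, j ≤ n → 2 * h n + 1 ≤ (j : ℝ) →
      v j n * x j n = j * (1 - n * S ((j : ℝ) - 1) / j) ∧
      (j : ℝ) / 2 ≤ v j n * x j n ∧
      (v j n) ^ 2 ≤ n * S ((j : ℝ) - 1) ∧
      n * S ((j : ℝ) - 1) ≤ j ∧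
      Real.sqrt j / 2 ≤ x j n := by
  intro n hn j hjn hj
  have hnR : (1:ℝ) ≤ (n:ℝ) := by exact_mod_cast hn
  have hSm_nonneg : ∀ y : ℝ, 0 ≤ Sm y := fun y => by rw [hSm]; exact ENNReal.toReal_nonneg
  have hSm_le_one : ∀ y : ℝ, Sm y ≤ 1 := by
    intro y
    rw [hSm]
    have : ℙ {ω | y ≤ X ω} ≤ 1 := prob_le_one
    calc (ℙ {ω | y ≤ X ω}).toReal ≤ (1 : ENNReal).toReal :=
          ENNReal.toReal_mono (by simp) this
      _ = 1 := by simp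
  have hSSm : ∀ y t : ℝ, y ≤ t → S t ≤ Sm y := by
    intro y t hyt
    rw [hS, hSm]
    exact ENNReal.toReal_mono (measure_ne_top _ _)
      (measure_mono (fun ω hω => le_trans hyt (le_of_lt hω)))
  set B : Set ℝ := {y : ℝ | 0 ≤ y ∧ y ≤ n * Sm y} with hB
  have hBdd : BddAbove B := by
    refine ⟨n, fun y hy => ?_⟩
    have h1 := hSm_le_one y
    have := hy.2
    nlinarith
  have hhB : h n = sSup B := hh n
  -- positivity of h n
  have hpos : 0 < h n := by
    have hk : ∃ k : ℕ, ℙ {ω | 1/((k:ℝ)+1) ≤ X ω} ≠ 0 := by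
      by_contra hc
      push_neg at hc
      have hun : (Set.univ : Set Ω) ⊆ ⋃ k : ℕ, {ω | 1/((k:ℝ)+1) ≤ X ω} := by
        intro ω _
        obtain ⟨k, hk⟩ := exists_nat_one_div_lt (hXpos ω)
        exact Set.mem_iUnion.mpr ⟨k, le_of_lt hk⟩
      have : (ℙ (Set.univ : Set Ω)) ≤ 0 := by
        calc ℙ Set.univ ≤ ℙ (⋃ k : ℕ, {ω | 1/((k:ℝ)+1) ≤ X ω}) := measure_mono hun
          _ = 0 := measure_iUnion_null hc
      simp at this
    obtain ⟨k, hk⟩ := hk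
    set c : ℝ := 1/((k:ℝ)+1) with hc
    have hcpos : 0 < c := by positivity
    have hSmc : 0 < Sm c := by
      rw [hSm]
      exact ENNReal.toReal_pos hk (measure_ne_top _ _)
    set y0 : ℝ := min c (n * Sm c) with hy0
    have hy0pos : 0 < y0 := lt_min hcpos (by nlinarith)
    have hmem : y0 ∈ B := by
      constructor
      · exact le_of_lt hy0pos
      · have h1 : y0 ≤ c := min_le_left _ _
        have h2 : Sm c ≤ Sm y0 := by
          rw [hSm, hSm]
          exact ENNReal.toReal_mono (measure_ne_top _ _)
            (measure_mono (fun ω hω => le_trans h1 hω))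
        have h3 : y0 ≤ n * Sm c := min_le_right _ _
        nlinarith
    have := le_csSup hBdd hmem
    rw [hhB]; linarith
  -- out of the set
  have hout : ∀ y : ℝ, h n < y → n * Sm y < y := by
    intro y hy
    by_contra hle
    push_neg at hle
    have : y ∈ B := ⟨le_of_lt (lt_trans hpos hy), hle⟩
    have := le_csSup hBdd this
    rw [← hhB] at this
    linarith
  set t : ℝ := (j:ℝ) - 1 with ht
  have hht : 2 * h n ≤ t := by linarith
  have hhtlt : h n < t := by linarith
  have hnSt_lt : (n:ℝ) * S t < t := by
    have h1 := hout t hhtlt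
    have h2 := hSSm t t le_rfl
    nlinarith
  have hA : (n:ℝ) * S t ≤ h n := by
    by_contra h'
    push_neg at h'
    have hylt : (n:ℝ) * S t ≤ t := le_of_lt hnSt_lt
    have h1 := hout _ h'
    have h2 := hSSm ((n:ℝ) * S t) t hylt
    nlinarith
  have hSt_pos := hSpos t
  have hnSt : (n:ℝ) * S t ≤ t / 2 := by linarith
  have hjn' : (j:ℝ) ≤ n := by exact_mod_cast hjn
  have hj1 : (1:ℝ) < (j:ℝ) := by linarith
  have hS_lt1 : S t < 1 := by nlinarith
  have hv_pos : 0 < v j n := by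
    rw [hv]
    apply Real.sqrt_pos.mpr
    have : (0:ℝ) < (n:ℝ) * S t := by nlinarith
    nlinarith
  have e1 : v j n * x j n = (j:ℝ) - (n:ℝ) * S t := by
    rw [hx]
    field_simp
    rfl
  have e2 : (j:ℝ) * (1 - (n:ℝ) * S t / (j:ℝ)) = (j:ℝ) - (n:ℝ) * S t := by
    field_simp
  have g2 : (j:ℝ) / 2 ≤ v j n * x j n := by rw [e1]; linarith
  have g4 : (n:ℝ) * S t ≤ (j:ℝ) := by linarith
  have hnSt_nonneg : (0:ℝ) ≤ (n:ℝ) * S t := by nlinarith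
  have hnn : (0:ℝ) ≤ (n:ℝ) * S t * (1 - S t) := by nlinarith
  have g3 : (v j n) ^ 2 ≤ (n:ℝ) * S t := by
    rw [hv, Real.sq_sqrt hnn]
    have h9 : (0:ℝ) ≤ (n:ℝ) * S t * S t := mul_nonneg hnSt_nonneg hSt_pos.le
    nlinarith [h9]
  refine ⟨e1.trans e2.symm, g2, g3, g4, ?_⟩
  have hjpos : (0:ℝ) < (j:ℝ) := by linarith
  have hv_le : v j n ≤ Real.sqrt j := by
    rw [hv]
    apply Real.sqrt_le_sqrt
    nlinarith
  have hsq : Real.sqrt j * Real.sqrt j = (j:ℝ) := Real.mul_self_sqrt (le_of_lt hjpos)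
  have key : Real.sqrt j / 2 * v j n ≤ v j n * x j n := by
    calc Real.sqrt j / 2 * v j n ≤ Real.sqrt j / 2 * Real.sqrt j :=
          mul_le_mul_of_nonneg_left hv_le (by positivity)
      _ = (j:ℝ) / 2 := by rw [div_mul_eq_mul_div, hsq]
      _ ≤ v j n * x j n := g2
  have := le_of_mul_le_mul_right (by linarith [key] : Real.sqrt j / 2 * v j n ≤ x j n * v j n) hv_pos
  linarith
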